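/- Let m ≥ 1 and s ≥ 1 be integers and let c_{j,r} ∈ ℚ for 1 ≤ j ≤ m and 1 ≤ r ≤ s be rational numbers satisfying Σ_{j=1}^m c_{j,1} = 0. Define R : ℕ → ℚ by R(k) = Σ_{j=1}^m Σ_{r=1}^s c_{j,r}/(k+j)^r. Then the series Σ_{k=0}^∞ R(k) converges absolutely and there exists a rational number q such that Σ_{k=0}^∞ R(k) = q + Σ_{r=2}^s (Σ_{j=1}^m c_{j,r}) · ζ(r). -/

import Mathlib

/-- `ζ(k) = Σ_{m=1}^∞ m^{-k}`. -/
noncomputable def zetaVal (k : ℕ) : ℝ := ∑' m : ℕ, 1 / ((m : ℝ) + 1) ^ k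

open Filter Finset

lemma hasSum_tele (a : ℝ) (ha : 0 < a) :
    HasSum (fun k : ℕ => 1 / ((k : ℝ) + a) - 1 / ((k : ℝ) + a + 1)) (1 / a) := by
  rw [hasSum_iff_tendsto_nat_of_nonneg]
  · have key : ∀ n : ℕ, ∑ k ∈ Finset.range n,
        (1 / ((k : ℝ) + a) - 1 / ((k : ℝ) + a + 1)) = 1 / a - 1 / ((n : ℝ) + a) := by
      intro n
      have := Finset.sum_range_sub' (fun k : ℕ => 1 / ((k : ℝ) + a)) n
      simp only [Nat.cast_zero, zero_add] at this
      rw [← this]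
      apply Finset.sum_congr rfl
      intro k _
      push_cast
      ring_nf
    simp only [key]
    have h0 : Tendsto (fun n : ℕ => ((n : ℝ) + a)⁻¹) atTop (nhds 0) :=
      (tendsto_atTop_add_const_right _ a tendsto_natCast_atTop_atTop).inv_tendsto_atTop
    simp only [one_div]
    simpa using (tendsto_const_nhds (x := a⁻¹)).sub h0
  · intro k
    have hk : (0:ℝ) < (k : ℝ) + a := by positivity
    have : 1 / ((k : ℝ) + a + 1) ≤ 1 / ((k : ℝ) + a) :=
      one_div_le_one_div_of_le hk (by linarith)
    linarith

lemma hasSum_g (j : ℕ) (hj : 1 ≤ j) :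
    HasSum (fun k : ℕ => 1 / ((k : ℝ) + 1) - 1 / ((k : ℝ) + j))
      (∑ i ∈ Finset.range (j - 1), 1 / ((i : ℝ) + 1)) := by
  have step : ∀ i : ℕ, i ∈ Finset.range (j - 1) →
      HasSum (fun k : ℕ => 1 / ((k : ℝ) + ((i : ℝ) + 1)) - 1 / ((k : ℝ) + ((i : ℝ) + 1) + 1))
        (1 / ((i : ℝ) + 1)) := by
    intro i _
    exact hasSum_tele ((i : ℝ) + 1) (by positivity)
  have eqf : ∀ k : ℕ, ∑ i ∈ Finset.range (j - 1),
      (1 / ((k : ℝ) + ((i : ℝ) + 1)) - 1 / ((k : ℝ) + ((i : ℝ) + 1) + 1))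
      = 1 / ((k : ℝ) + 1) - 1 / ((k : ℝ) + j) := by
    intro k
    have t := Finset.sum_range_sub' (fun i : ℕ => 1 / ((k : ℝ) + (i : ℝ) + 1)) (j - 1)
    have h1 : ∑ i ∈ Finset.range (j - 1),
        (1 / ((k : ℝ) + ((i : ℝ) + 1)) - 1 / ((k : ℝ) + ((i : ℝ) + 1) + 1))
        = ∑ i ∈ Finset.range (j - 1),
          ((fun i : ℕ => 1 / ((k : ℝ) + (i : ℝ) + 1)) i
            - (fun i : ℕ => 1 / ((k : ℝ) + (i : ℝ) + 1)) (i + 1)) := by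
      apply Finset.sum_congr rfl
      intro i _
      push_cast
      ring
    rw [h1, t, Nat.cast_sub hj]
    push_cast
    ring
  have h := hasSum_sum step
  simpa only [eqf] using h

lemma hasSum_shift (j r : ℕ) (hj : 1 ≤ j) (hr : 2 ≤ r) :
    HasSum (fun k : ℕ => 1 / ((k : ℝ) + j) ^ r)
      (zetaVal r - ∑ i ∈ Finset.range (j - 1), 1 / ((i : ℝ) + 1) ^ r) := by
  have hsumf : Summable (fun n : ℕ => 1 / ((n : ℝ) + 1) ^ r) := by
    have h1 : Summable (fun n : ℕ => 1 / ((n : ℝ)) ^ r) :=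
      Real.summable_one_div_nat_pow.mpr (by omega)
    have h2 := (summable_nat_add_iff 1).mpr h1
    apply h2.congr
    intro n
    push_cast
    ring
  have hz : HasSum (fun n : ℕ => 1 / ((n : ℝ) + 1) ^ r) (zetaVal r) := hsumf.hasSum
  have hz' : HasSum (fun n : ℕ => 1 / ((n : ℝ) + 1) ^ r)
      ((zetaVal r - ∑ i ∈ Finset.range (j - 1), 1 / ((i : ℝ) + 1) ^ r)
        + ∑ i ∈ Finset.range (j - 1), 1 / ((i : ℝ) + 1) ^ r) := by
    rwa [sub_add_cancel]
  have key := (hasSum_nat_add_iff (f := fun n : ℕ => 1 / ((n : ℝ) + 1) ^ r) (j - 1)).mpr hz'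
  have heq : ∀ n : ℕ, 1 / (((n + (j - 1) : ℕ) : ℝ) + 1) ^ r = 1 / ((n : ℝ) + j) ^ r := by
    intro n
    rw [Nat.cast_add, Nat.cast_sub hj]
    push_cast
    ring_nf
  simpa only [heq] using key

theorem stmt15 (m s : ℕ) (hm : 1 ≤ m) (hs : 1 ≤ s) (c : ℕ → ℕ → ℚ)
    (hc : ∑ j ∈ Finset.Icc 1 m, c j 1 = 0) :
    Summable (fun k : ℕ =>
      |∑ j ∈ Finset.Icc 1 m, ∑ r ∈ Finset.Icc 1 s,
        (c j r : ℝ) / ((k : ℝ) + (j : ℝ)) ^ r|) ∧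
    ∃ q : ℚ,
      (∑' k : ℕ, ∑ j ∈ Finset.Icc 1 m, ∑ r ∈ Finset.Icc 1 s,
          (c j r : ℝ) / ((k : ℝ) + (j : ℝ)) ^ r)
        = (q : ℝ) + ∑ r ∈ Finset.Icc 2 s,
            ((∑ j ∈ Finset.Icc 1 m, c j r : ℚ) : ℝ) * zetaVal r := by
  classical
  have h1 : ∀ j ∈ Finset.Icc 1 m, HasSum
      (fun k : ℕ => (-(c j 1 : ℝ)) * (1 / ((k : ℝ) + 1) - 1 / ((k : ℝ) + j)))
      ((-(c j 1 : ℝ)) * ∑ i ∈ Finset.range (j - 1), 1 / ((i : ℝ) + 1)) :=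
    fun j hj => (hasSum_g j (Finset.mem_Icc.mp hj).1).mul_left _
  have h2 : ∀ j ∈ Finset.Icc 1 m, HasSum
      (fun k : ℕ => ∑ r ∈ Finset.Icc 2 s, (c j r : ℝ) * (1 / ((k : ℝ) + j) ^ r))
      (∑ r ∈ Finset.Icc 2 s, (c j r : ℝ)
        * (zetaVal r - ∑ i ∈ Finset.range (j - 1), 1 / ((i : ℝ) + 1) ^ r)) :=
    fun j hj => hasSum_sum (fun r hr =>
      (hasSum_shift j r (Finset.mem_Icc.mp hj).1 (Finset.mem_Icc.mp hr).1).mul_left _)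
  have hA : HasSum (fun k : ℕ => ∑ j ∈ Finset.Icc 1 m,
      ((-(c j 1 : ℝ)) * (1 / ((k : ℝ) + 1) - 1 / ((k : ℝ) + j))
        + ∑ r ∈ Finset.Icc 2 s, (c j r : ℝ) * (1 / ((k : ℝ) + j) ^ r)))
      (∑ j ∈ Finset.Icc 1 m,
        ((-(c j 1 : ℝ)) * ∑ i ∈ Finset.range (j - 1), 1 / ((i : ℝ) + 1)
          + ∑ r ∈ Finset.Icc 2 s, (c j r : ℝ)
            * (zetaVal r - ∑ i ∈ Finset.range (j - 1), 1 / ((i : ℝ) + 1) ^ r))) :=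
    hasSum_sum (fun j hj => (h1 j hj).add (h2 j hj))
  have hc' : ∑ j ∈ Finset.Icc 1 m, (c j 1 : ℝ) = 0 := by
    have := congrArg (fun x : ℚ => (x : ℝ)) hc
    push_cast at this
    exact this
  have hIcc : Finset.Icc 1 s = insert 1 (Finset.Icc 2 s) := by
    ext x
    simp only [Finset.mem_Icc, Finset.mem_insert]
    omega
  have hpt : ∀ k : ℕ, (∑ j ∈ Finset.Icc 1 m, ∑ r ∈ Finset.Icc 1 s,
      (c j r : ℝ) / ((k : ℝ) + (j : ℝ)) ^ r)
      = ∑ j ∈ Finset.Icc 1 m,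
        ((-(c j 1 : ℝ)) * (1 / ((k : ℝ) + 1) - 1 / ((k : ℝ) + j))
          + ∑ r ∈ Finset.Icc 2 s, (c j r : ℝ) * (1 / ((k : ℝ) + j) ^ r)) := by
    intro k
    have hsplit : ∀ j : ℕ, ∑ r ∈ Finset.Icc 1 s, (c j r : ℝ) / ((k : ℝ) + (j : ℝ)) ^ r
        = (c j 1 : ℝ) * (1 / ((k : ℝ) + j))
          + ∑ r ∈ Finset.Icc 2 s, (c j r : ℝ) * (1 / ((k : ℝ) + j) ^ r) := by
      intro j
      rw [hIcc, Finset.sum_insert (by simp)]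
      congr 1
      · rw [pow_one, div_eq_mul_one_div]
      · exact Finset.sum_congr rfl (fun r _ => div_eq_mul_one_div _ _)
    simp only [hsplit]
    rw [Finset.sum_add_distrib, Finset.sum_add_distrib]
    congr 1
    have hexp : ∑ j ∈ Finset.Icc 1 m,
        (-(c j 1 : ℝ)) * (1 / ((k : ℝ) + 1) - 1 / ((k : ℝ) + j))
        = ∑ j ∈ Finset.Icc 1 m, ((c j 1 : ℝ) * (1 / ((k : ℝ) + j))
          - (c j 1 : ℝ) * (1 / ((k : ℝ) + 1))) := by
      exact Finset.sum_congr rfl (fun j _ => by ring)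
    rw [hexp, Finset.sum_sub_distrib, ← Finset.sum_mul, hc', zero_mul, sub_zero]
  have hR : HasSum (fun k : ℕ => ∑ j ∈ Finset.Icc 1 m, ∑ r ∈ Finset.Icc 1 s,
      (c j r : ℝ) / ((k : ℝ) + (j : ℝ)) ^ r)
      (∑ j ∈ Finset.Icc 1 m,
        ((-(c j 1 : ℝ)) * ∑ i ∈ Finset.range (j - 1), 1 / ((i : ℝ) + 1)
          + ∑ r ∈ Finset.Icc 2 s, (c j r : ℝ)
            * (zetaVal r - ∑ i ∈ Finset.range (j - 1), 1 / ((i : ℝ) + 1) ^ r))) := by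
    rw [show (fun k : ℕ => ∑ j ∈ Finset.Icc 1 m, ∑ r ∈ Finset.Icc 1 s,
        (c j r : ℝ) / ((k : ℝ) + (j : ℝ)) ^ r) = _ from funext hpt]
    exact hA
  refine ⟨hR.summable.abs, ?_⟩
  refine ⟨(∑ j ∈ Finset.Icc 1 m, (-(c j 1)) * ∑ i ∈ Finset.range (j - 1), 1 / ((i : ℚ) + 1))
    - ∑ j ∈ Finset.Icc 1 m, ∑ r ∈ Finset.Icc 2 s,
        c j r * ∑ i ∈ Finset.range (j - 1), 1 / ((i : ℚ) + 1) ^ r, ?_⟩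
  rw [hR.tsum_eq]
  push_cast
  have hswap : ∑ r ∈ Finset.Icc 2 s, (∑ j ∈ Finset.Icc 1 m, (c j r : ℝ)) * zetaVal r
      = ∑ j ∈ Finset.Icc 1 m, ∑ r ∈ Finset.Icc 2 s, (c j r : ℝ) * zetaVal r := by
    rw [Finset.sum_comm]
    exact Finset.sum_congr rfl (fun r _ => Finset.sum_mul _ _ _)
  rw [hswap]
  simp only [mul_sub, Finset.sum_sub_distrib, Finset.sum_add_distrib]
  ring
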